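/- arXiv:2307.07180 — 3 statements merged into one kernel-verified Lean document; each statement's English description precedes it below -/
import Mathlib

section
/- Let (G, D, w) be a metric MDMTSP instance, F a minimum-weight CSF, and M a minimum-weight perfect matching in the metric completion on the set U of odd-degree nodes of F. Then the multiset F ∪̇ M is a tour of (G, D, w) (every node has even degree and every component contains a depot) with w(F ∪̇ M) ≤ 2·OPT. -/
open scoped Classical

noncomputable def deg {V : Type*} (E : Multiset (Sym2 V)) (v : V) : ℕ :=
  (E.filter (fun e => v ∈ e)).card

def Connects {V : Type*} (E : Multiset (Sym2 V)) : V → V → Prop :=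
  Relation.ReflTransGen (fun a b => s(a, b) ∈ E)

noncomputable def mweight {V : Type*} (w : Sym2 V → ℝ) (E : Multiset (Sym2 V)) : ℝ :=
  (E.map w).sum

def IsMetric {V : Type*} (w : Sym2 V → ℝ) : Prop :=
  (∀ e, 0 ≤ w e) ∧ ∀ a b c : V, w s(a, c) ≤ w s(a, b) + w s(b, c)

def IsTour {V : Type*} (D : Finset V) (T : Multiset (Sym2 V)) : Prop :=
  (∀ e ∈ T, ¬ Sym2.IsDiag e) ∧ (∀ v, Even (deg T v)) ∧ ∀ v, ∃ d ∈ D, Connects T v d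

def IsCSF {V : Type*} (D : Finset V) (F : Finset (Sym2 V)) : Prop :=
  (∀ e ∈ F, ¬ Sym2.IsDiag e) ∧
  (SimpleGraph.fromEdgeSet (↑F : Set (Sym2 V))).IsAcyclic ∧
  ∀ v, ∃ d ∈ D, Connects F.val v d

def IsPM {V : Type*} (U : Finset V) (M : Multiset (Sym2 V)) : Prop :=
  (∀ e ∈ M, ¬ Sym2.IsDiag e) ∧ ∀ v, deg M v = if v ∈ U then 1 else 0

def IsRPPSol {V : Type*} (R J : Multiset (Sym2 V)) : Prop :=
  (∀ e ∈ J, ¬ Sym2.IsDiag e) ∧ (∀ v, Even (deg (R + J) v)) ∧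
  ∀ u v : V, (∃ e ∈ R + J, u ∈ e) → (∃ e ∈ R + J, v ∈ e) → Connects (R + J) u v

section Helpers
variable {V : Type*}

lemma deg_cons (e : Sym2 V) (E : Multiset (Sym2 V)) (v : V) :
    deg (e ::ₘ E) v = (if v ∈ e then 1 else 0) + deg E v := by
  simp [deg, Multiset.filter_cons]; split <;> simp

lemma deg_add (A B : Multiset (Sym2 V)) (v : V) : deg (A + B) v = deg A v + deg B v := by
  simp [deg, Multiset.filter_add]

lemma mweight_cons (w : Sym2 V → ℝ) (e : Sym2 V) (E : Multiset (Sym2 V)) :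
    mweight w (e ::ₘ E) = w e + mweight w E := by simp [mweight]

lemma mweight_add (w : Sym2 V → ℝ) (A B : Multiset (Sym2 V)) :
    mweight w (A + B) = mweight w A + mweight w B := by simp [mweight]

lemma mweight_nonneg {w : Sym2 V → ℝ} (hw : ∀ e, 0 ≤ w e) (E : Multiset (Sym2 V)) :
    0 ≤ mweight w E :=
  Multiset.sum_nonneg (by rintro x hx; obtain ⟨e, _, rfl⟩ := Multiset.mem_map.mp hx; exact hw e)

lemma mweight_mono {w : Sym2 V → ℝ} (hw : ∀ e, 0 ≤ w e) {A B : Multiset (Sym2 V)}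
    (h : A ≤ B) : mweight w A ≤ mweight w B := by
  obtain ⟨C, rfl⟩ := Multiset.le_iff_exists_add.mp h
  rw [mweight_add]
  linarith [mweight_nonneg hw C]

lemma connects_mono {A B : Multiset (Sym2 V)} (h : ∀ e ∈ A, e ∈ B) {a b : V}
    (hab : Connects A a b) : Connects B a b :=
  Relation.ReflTransGen.mono (fun _ _ hxy => h _ hxy) a b hab

lemma connects_symm {E : Multiset (Sym2 V)} {a b : V} (h : Connects E a b) : Connects E b a := by
  induction h with
  | refl => exact Relation.ReflTransGen.refl
  | tail hs he ih => exact Relation.ReflTransGen.head (by rwa [Sym2.eq_swap]) ih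

lemma exists_edge_of_deg_pos {E : Multiset (Sym2 V)} {v : V} (h : deg E v ≠ 0) :
    ∃ e ∈ E, v ∈ e := by
  by_contra hc
  push_neg at hc
  apply h
  simp only [deg, Multiset.card_eq_zero, Multiset.filter_eq_nil]
  exact hc

lemma not_mem_of_deg_zero {E : Multiset (Sym2 V)} {v : V} (h : deg E v = 0) :
    ∀ e ∈ E, v ∉ e := by
  intro e he hv
  have hmem : e ∈ E.filter (fun e => v ∈ e) := Multiset.mem_filter.mpr ⟨he, hv⟩
  have : 0 < deg E v := Multiset.card_pos_iff_exists_mem.mpr ⟨e, hmem⟩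
  omega

lemma deg_pos_of_mem {E : Multiset (Sym2 V)} {e : Sym2 V} {v : V} (he : e ∈ E) (hv : v ∈ e) :
    deg E v ≠ 0 := fun h => not_mem_of_deg_zero h e he hv

lemma exists_matching {w : Sym2 V → ℝ} (hw : IsMetric w) (n : ℕ) :
    ∀ (E : Multiset (Sym2 V)), E.card = n → (∀ e ∈ E, ¬ e.IsDiag) →
    ∃ M' : Multiset (Sym2 V), (∀ e ∈ M', ¬ e.IsDiag) ∧
      (∀ x, deg M' x = if Odd (deg E x) then 1 else 0) ∧
      mweight w M' ≤ mweight w E := by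
  induction n using Nat.strong_induction_on with
  | _ n ih =>
  intro E hcard hnd
  by_cases hodd : ∃ u, Odd (deg E u)
  · obtain ⟨u, hu⟩ := hodd
    have hdu : deg E u ≠ 0 := by rintro h; rw [h] at hu; simp at hu
    obtain ⟨e, heE, hue⟩ := exists_edge_of_deg_pos hdu
    obtain ⟨v, rfl⟩ : ∃ v, e = s(u, v) := (Sym2.mem_iff_exists).mp hue
    have huv : u ≠ v := fun h => hnd _ heE (by simp [Sym2.mk_isDiag_iff, h])
    set E' := E.erase s(u, v) with hE'def
    have hEE' : E = s(u, v) ::ₘ E' := (Multiset.cons_erase heE).symm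
    have hdeg : ∀ x, deg E x = (if x = u ∨ x = v then 1 else 0) + deg E' x := by
      intro x
      rw [hEE', deg_cons]
      congr 1
      simp only [Sym2.mem_iff]
    have hcard' : E'.card < n := by
      have : E.card = E'.card + 1 := by rw [hEE']; simp
      omega
    have hnd' : ∀ e ∈ E', ¬ e.IsDiag := fun e he => hnd e (Multiset.mem_of_mem_erase he)
    obtain ⟨M'', hnd'', hdeg'', hwt''⟩ := ih E'.card hcard' E' rfl hnd'
    have hEu : deg E u = 1 + deg E' u := by rw [hdeg u]; simp
    have hEv : deg E v = 1 + deg E' v := by rw [hdeg v]; simp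
    have hMu : deg M'' u = 0 := by
      rw [hdeg'' u, if_neg]
      rw [Nat.odd_iff] at hu ⊢
      omega
    have hwE : mweight w E = w s(u, v) + mweight w E' := by rw [hEE', mweight_cons]
    by_cases hv : Odd (deg E v)
    · have hMv : deg M'' v = 0 := by
        rw [hdeg'' v, if_neg]
        rw [Nat.odd_iff] at hv ⊢
        omega
      refine ⟨s(u, v) ::ₘ M'', ?_, ?_, ?_⟩
      · intro e he
        rcases Multiset.mem_cons.mp he with rfl | he
        · simp [Sym2.mk_isDiag_iff, huv]
        · exact hnd'' e he
      · intro x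
        rw [deg_cons]
        by_cases hxu : x = u
        · subst hxu; simp [hMu, hu]
        · by_cases hxv : x = v
          · subst hxv; simp [hMv, hv]
          · have hEx : deg E x = deg E' x := by rw [hdeg x, if_neg (by tauto)]; omega
            rw [hdeg'' x, if_neg (by rw [Sym2.mem_iff]; tauto), hEx]
            omega
      · rw [mweight_cons, hwE]
        linarith
    · have hv' : Odd (deg E' v) := by
        rw [Nat.odd_iff] at hv ⊢
        omega
      have hMv : deg M'' v = 1 := by rw [hdeg'' v, if_pos hv']
      obtain ⟨f, hfM, hvf⟩ := exists_edge_of_deg_pos (by rw [hMv]; omega)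
      obtain ⟨x, rfl⟩ : ∃ x, f = s(v, x) := (Sym2.mem_iff_exists).mp hvf
      have hvx : v ≠ x := fun h => hnd'' _ hfM (by simp [Sym2.mk_isDiag_iff, h])
      have hux : u ≠ x := by
        rintro rfl
        exact not_mem_of_deg_zero hMu _ hfM (by rw [Sym2.mem_iff]; tauto)
      set N := M''.erase s(v, x) with hNdef
      have hMN : M'' = s(v, x) ::ₘ N := (Multiset.cons_erase hfM).symm
      have hdegM : ∀ y, deg M'' y = (if y = v ∨ y = x then 1 else 0) + deg N y := by
        intro y
        rw [hMN, deg_cons]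
        congr 1
        simp only [Sym2.mem_iff]
      have hx1 : deg M'' x ≠ 0 := deg_pos_of_mem hfM (by rw [Sym2.mem_iff]; tauto)
      have hoE'x : Odd (deg E' x) := by
        by_contra h
        rw [hdeg'' x, if_neg h] at hx1
        simp at hx1
      have hMx : deg M'' x = 1 := by rw [hdeg'' x, if_pos hoE'x]
      have hEx : deg E x = deg E' x := by rw [hdeg x, if_neg (by tauto)]; omega
      have hoEx : Odd (deg E x) := by rw [hEx]; exact hoE'x
      refine ⟨s(u, x) ::ₘ N, ?_, ?_, ?_⟩
      · intro e he
        rcases Multiset.mem_cons.mp he with rfl | he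
        · simp [Sym2.mk_isDiag_iff, hux]
        · exact hnd'' e (Multiset.mem_of_mem_erase he)
      · intro y
        rw [deg_cons]
        by_cases hyu : u = y
        · subst hyu
          have hN : deg N u = 0 := by have := hdegM u; rw [hMu, if_neg (by tauto)] at this; omega
          rw [hN, if_pos (by rw [Sym2.mem_iff]; tauto), if_pos hu]
        · by_cases hyv : v = y
          · subst hyv
            have hN : deg N v = 0 := by have := hdegM v; rw [hMv, if_pos (by tauto)] at this; omega
            rw [hN, if_neg hv, if_neg (by rw [Sym2.mem_iff]; tauto)]
          · by_cases hyx : x = y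
            · subst hyx
              have hN : deg N x = 0 := by have := hdegM x; rw [hMx, if_pos (by tauto)] at this; omega
              rw [hN, if_pos (by rw [Sym2.mem_iff]; tauto), if_pos hoEx]
            · have h1 : deg N y = deg M'' y := by rw [hdegM y, if_neg (by tauto)]; omega
              have h2 : deg E y = deg E' y := by rw [hdeg y, if_neg (by tauto)]; omega
              rw [if_neg (by rw [Sym2.mem_iff]; tauto), h1, hdeg'' y, h2]
              omega
      · have htri : w s(u, x) ≤ w s(u, v) + w s(v, x) := hw.2 u v x
        have hMN' : mweight w M'' = w s(v, x) + mweight w N := by rw [hMN, mweight_cons]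
        rw [mweight_cons, hwE]
        linarith
  · push_neg at hodd
    refine ⟨0, by simp, ?_, mweight_nonneg hw.1 E⟩
    intro x
    rw [if_neg (hodd x)]
    simp [deg]

lemma connects_erase {S : Finset (Sym2 V)} {x y : V}
    (hxy : Connects (S.erase s(x, y)).val y x) :
    ∀ {a b : V}, Connects S.val a b → Connects (S.erase s(x, y)).val a b := by
  intro a b h
  induction h with
  | refl => exact Relation.ReflTransGen.refl
  | @tail c d hcd hstep ih =>
    refine ih.trans ?_
    by_cases he : s(c, d) = s(x, y)
    · rw [Sym2.eq_iff] at he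
      rcases he with ⟨rfl, rfl⟩ | ⟨rfl, rfl⟩
      · exact connects_symm hxy
      · exact hxy
    · exact Relation.ReflTransGen.single (Finset.mem_erase.mpr ⟨he, hstep⟩)

lemma walk_avoid {S : Finset (Sym2 V)} {x y : V} :
    ∀ {a b : V} (p : (SimpleGraph.fromEdgeSet (↑S : Set (Sym2 V))).Walk a b),
      s(x, y) ∉ p.edges → Connects (S.erase s(x, y)).val a b := by
  intro a b p
  induction p with
  | nil => intro _; exact Relation.ReflTransGen.refl
  | @cons a c b h q ih =>
    intro hne
    rw [SimpleGraph.Walk.edges_cons, List.mem_cons] at hne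
    push_neg at hne
    have h1 : s(a, c) ∈ S := by
      have := ((SimpleGraph.fromEdgeSet_adj _).mp h).1
      simpa using this
    exact Relation.ReflTransGen.head
      (Finset.mem_erase.mpr ⟨fun hh => hne.1 hh.symm, h1⟩) (ih hne.2)

lemma exists_forest (n : ℕ) : ∀ (S : Finset (Sym2 V)), S.card = n →
    ∃ F' : Finset (Sym2 V), F' ⊆ S ∧
      (SimpleGraph.fromEdgeSet (↑F' : Set (Sym2 V))).IsAcyclic ∧
      ∀ a b : V, Connects S.val a b → Connects F'.val a b := by
  induction n using Nat.strong_induction_on with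
  | _ n ih =>
  intro S hcard
  by_cases hac : (SimpleGraph.fromEdgeSet (↑S : Set (Sym2 V))).IsAcyclic
  · exact ⟨S, subset_rfl, hac, fun a b h => h⟩
  · simp only [SimpleGraph.IsAcyclic] at hac
    push_neg at hac
    obtain ⟨v, c, hc⟩ := hac
    cases c with
    | nil => exact absurd rfl hc.ne_nil
    | @cons _ b _ h p =>
      have hedge : s(v, b) ∈ S := by
        have := ((SimpleGraph.fromEdgeSet_adj _).mp h).1
        simpa using this
      have hnot : s(v, b) ∉ p.edges := ((SimpleGraph.Walk.cons_isCycle_iff p h).mp hc).2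
      have hconn : Connects (S.erase s(v, b)).val b v := walk_avoid p hnot
      have hcard' : (S.erase s(v, b)).card < n := by
        rw [Finset.card_erase_of_mem hedge]
        have : 0 < S.card := Finset.card_pos.mpr ⟨_, hedge⟩
        omega
      obtain ⟨F', hsub, hF'ac, hF'conn⟩ := ih _ hcard' _ rfl
      refine ⟨F', hsub.trans (Finset.erase_subset _ _), hF'ac, ?_⟩
      intro a b' hab
      exact hF'conn a b' (connects_erase hconn hab)

end Helpers

theorem stmt3 {V : Type*} [Fintype V] (D : Finset V) (hD : D.Nonempty)
    (w : Sym2 V → ℝ) (hw : IsMetric w)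
    (F : Finset (Sym2 V)) (hF : IsCSF D F)
    (hFmin : ∀ F', IsCSF D F' → ∑ e ∈ F, w e ≤ ∑ e ∈ F', w e)
    (U : Finset V) (hU : ∀ v, v ∈ U ↔ Odd (deg F.val v))
    (M : Multiset (Sym2 V)) (hM : IsPM U M)
    (hMmin : ∀ M', IsPM U M' → mweight w M ≤ mweight w M')
    (T : Multiset (Sym2 V)) (hT : IsTour D T)
    (hTmin : ∀ T', IsTour D T' → mweight w T ≤ mweight w T') :
    IsTour D (F.val + M) ∧ mweight w (F.val + M) ≤ 2 * mweight w T := by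
  classical
  have hwnn := hw.1
  -- Part 1: F + M is a tour
  have htour : IsTour D (F.val + M) := by
    refine ⟨?_, ?_, ?_⟩
    · intro e he
      rcases Multiset.mem_add.mp he with he | he
      · exact hF.1 e he
      · exact hM.1 e he
    · intro v
      rw [deg_add, hM.2 v]
      by_cases hvU : v ∈ U
      · have := (hU v).mp hvU
        rw [if_pos hvU]
        rw [Nat.odd_iff] at this
        rw [Nat.even_iff]
        omega
      · have : ¬ Odd (deg F.val v) := fun h => hvU ((hU v).mpr h)
        rw [if_neg hvU]
        rw [Nat.odd_iff] at this
        rw [Nat.even_iff]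
        omega
    · intro v
      obtain ⟨d, hd, hc⟩ := hF.2.2 v
      exact ⟨d, hd, connects_mono (fun e he => Multiset.mem_add.mpr (Or.inl he)) hc⟩
  -- Part 2a: weight of F is at most weight of T
  have hTmemS : ∀ e ∈ T, e ∈ T.toFinset.val := fun e he => Multiset.mem_toFinset.mpr he
  obtain ⟨F', hsub, hacy, hconn⟩ := exists_forest T.toFinset.card T.toFinset rfl
  have hF'csf : IsCSF D F' := by
    refine ⟨fun e he => hT.1 e (Multiset.mem_toFinset.mp (hsub he)), hacy, fun v => ?_⟩
    obtain ⟨d, hd, hc⟩ := hT.2.2 v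
    exact ⟨d, hd, hconn _ _ (connects_mono hTmemS hc)⟩
  have hsumF' : ∑ e ∈ F', w e = mweight w F'.val := rfl
  have hsumF : ∑ e ∈ F, w e = mweight w F.val := rfl
  have hF'leT : mweight w F'.val ≤ mweight w T := by
    apply mweight_mono hwnn
    calc F'.val ≤ T.toFinset.val := Finset.val_le_iff.mpr hsub
    _ = T.dedup := Multiset.toFinset_val T
    _ ≤ T := Multiset.dedup_le T
  have hFleT : mweight w F.val ≤ mweight w T := by
    have := hFmin F' hF'csf
    rw [hsumF', hsumF] at this
    linarith
  -- Part 2b: weight of M is at most weight of F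
  obtain ⟨M', hnd', hdeg', hwt'⟩ :=
    exists_matching hw F.val.card F.val rfl (fun e he => hF.1 e he)
  have hM'pm : IsPM U M' := by
    refine ⟨hnd', fun v => ?_⟩
    rw [hdeg' v]
    by_cases hvU : v ∈ U
    · rw [if_pos ((hU v).mp hvU), if_pos hvU]
    · rw [if_neg (fun h => hvU ((hU v).mpr h)), if_neg hvU]
  have hMleF : mweight w M ≤ mweight w F.val := le_trans (hMmin M' hM'pm) hwt'
  refine ⟨htour, ?_⟩
  rw [mweight_add]
  linarith
end

section
/- Let F be a forest (acyclic edge set) on vertex set V whose every connected component contains a depot from D, and let F' be another forest on V whose every component contains a depot, with F' ∩ X = ∅ for a given set X ⊆ F. If w(F) is minimum among all such constrained spanning forests, then there exists a set of edges Â ⊆ F' such that (F \ X) ∪ Â is again a constrained spanning forest for (V, D) and w((F \ X) ∪ Â) ≤ w(F'). -/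
open scoped Classical

namespace CSFAux

variable {V : Type*} [Fintype V] [DecidableEq V]

/-- Connectivity via an edge finset. -/
def Cn (S : Finset (Sym2 V)) : V → V → Prop :=
  Relation.ReflTransGen (fun a b => s(a, b) ∈ S)

lemma cn_eq_connects (S : Finset (Sym2 V)) : Cn S = Connects S.val := rfl

lemma Cn.refl (S : Finset (Sym2 V)) (v : V) : Cn S v v := Relation.ReflTransGen.refl

lemma cn_symm {S : Finset (Sym2 V)} {u v : V} (h : Cn S u v) : Cn S v u := by
  induction h with
  | refl => exact Relation.ReflTransGen.refl
  | tail _ hstep ih =>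
    refine Relation.ReflTransGen.trans (Relation.ReflTransGen.single ?_) ih
    rwa [Sym2.eq_swap]

lemma cn_trans {S : Finset (Sym2 V)} {u v x : V} (h : Cn S u v) (h' : Cn S v x) : Cn S u x :=
  Relation.ReflTransGen.trans h h'

lemma cn_mono {S S' : Finset (Sym2 V)} (hs : S ⊆ S') {u v : V} (h : Cn S u v) : Cn S' u v := by
  induction h with
  | refl => exact Relation.ReflTransGen.refl
  | tail _ hstep ih => exact Relation.ReflTransGen.tail ih (hs hstep)

lemma cn_step {S : Finset (Sym2 V)} {a b : V} (h : s(a,b) ∈ S) : Cn S a b :=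
  Relation.ReflTransGen.single h

/-- Decomposition of connectivity after inserting an edge. -/
lemma cn_insert_decomp {S : Finset (Sym2 V)} {a b u v : V}
    (h : Cn (insert s(a,b) S) u v) :
    Cn S u v ∨ (Cn S u a ∧ Cn S b v) ∨ (Cn S u b ∧ Cn S a v) := by
  induction h with
  | refl => exact Or.inl Relation.ReflTransGen.refl
  | @tail x y _ hstep ih =>
    rcases Finset.mem_insert.mp hstep with he | hS
    · -- s(x,y) = s(a,b)
      rcases Sym2.eq_iff.mp he with ⟨rfl, rfl⟩ | ⟨rfl, rfl⟩
      · rcases ih with h1 | ⟨h1, h2⟩ | ⟨h1, h2⟩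
        · exact Or.inr (Or.inl ⟨h1, Relation.ReflTransGen.refl⟩)
        · exact Or.inr (Or.inl ⟨h1, Relation.ReflTransGen.refl⟩)
        · exact Or.inl h1
      · rcases ih with h1 | ⟨h1, h2⟩ | ⟨h1, h2⟩
        · exact Or.inr (Or.inr ⟨h1, Relation.ReflTransGen.refl⟩)
        · exact Or.inl h1
        · exact Or.inr (Or.inr ⟨h1, Relation.ReflTransGen.refl⟩)
    · rcases ih with h1 | ⟨h1, h2⟩ | ⟨h1, h2⟩
      · exact Or.inl (Relation.ReflTransGen.tail h1 hS)
      · exact Or.inr (Or.inl ⟨h1, Relation.ReflTransGen.tail h2 hS⟩)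
      · exact Or.inr (Or.inr ⟨h1, Relation.ReflTransGen.tail h2 hS⟩)

variable (D : Finset V)

/-- Depot-connected. -/
def DC (S : Finset (Sym2 V)) (v : V) : Prop := ∃ d ∈ D, Cn S v d

variable {D}

lemma dc_mono {S S' : Finset (Sym2 V)} (hs : S ⊆ S') {v : V} (h : DC D S v) : DC D S' v := by
  obtain ⟨d, hd, hc⟩ := h; exact ⟨d, hd, cn_mono hs hc⟩

lemma cn_dc {S : Finset (Sym2 V)} {u v : V} (h : Cn S u v) (h' : DC D S v) : DC D S u := by
  obtain ⟨d, hd, hc⟩ := h'; exact ⟨d, hd, cn_trans h hc⟩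

variable (D)

/-- The relation whose classes we count: connected, or both depot-connected. -/
def Rel (S : Finset (Sym2 V)) (u v : V) : Prop :=
  Cn S u v ∨ (DC D S u ∧ DC D S v)

variable {D}

lemma Rel.refl' (S : Finset (Sym2 V)) (v : V) : Rel D S v v := Or.inl (Cn.refl S v)

lemma rel_symm {S : Finset (Sym2 V)} {u v : V} (h : Rel D S u v) : Rel D S v u := by
  rcases h with h | ⟨h1, h2⟩
  · exact Or.inl (cn_symm h)
  · exact Or.inr ⟨h2, h1⟩

lemma rel_trans {S : Finset (Sym2 V)} {u v x : V} (h : Rel D S u v) (h' : Rel D S v x) :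
    Rel D S u x := by
  rcases h with h | ⟨h1, h2⟩ <;> rcases h' with g | ⟨g1, g2⟩
  · exact Or.inl (cn_trans h g)
  · exact Or.inr ⟨cn_dc h g1, g2⟩
  · exact Or.inr ⟨h1, cn_dc (cn_symm g) h2⟩
  · exact Or.inr ⟨h1, g2⟩

lemma rel_mono {S S' : Finset (Sym2 V)} (hs : S ⊆ S') {u v : V} (h : Rel D S u v) :
    Rel D S' u v := by
  rcases h with h | ⟨h1, h2⟩
  · exact Or.inl (cn_mono hs h)
  · exact Or.inr ⟨dc_mono hs h1, dc_mono hs h2⟩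

lemma rel_of_edge {S : Finset (Sym2 V)} {a b : V} (h : s(a,b) ∈ S) : Rel D S a b :=
  Or.inl (cn_step h)

lemma dc_insert_decomp {S : Finset (Sym2 V)} {a b v : V}
    (h : DC D (insert s(a,b) S) v) :
    DC D S v ∨ (Cn S v a ∧ DC D S b) ∨ (Cn S v b ∧ DC D S a) := by
  obtain ⟨d, hd, hc⟩ := h
  rcases cn_insert_decomp hc with h1 | ⟨h1, h2⟩ | ⟨h1, h2⟩
  · exact Or.inl ⟨d, hd, h1⟩
  · exact Or.inr (Or.inl ⟨h1, ⟨d, hd, h2⟩⟩)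
  · exact Or.inr (Or.inr ⟨h1, ⟨d, hd, h2⟩⟩)

lemma rel_insert_iff {S : Finset (Sym2 V)} {a b u v : V} :
    Rel D (insert s(a,b) S) u v ↔
      Rel D S u v ∨ (Rel D S u a ∧ Rel D S v b) ∨ (Rel D S u b ∧ Rel D S v a) := by
  constructor
  · intro h
    rcases h with h | ⟨h1, h2⟩
    · rcases cn_insert_decomp h with h1 | ⟨h1, h2⟩ | ⟨h1, h2⟩
      · exact Or.inl (Or.inl h1)
      · exact Or.inr (Or.inl ⟨Or.inl h1, Or.inl (cn_symm h2)⟩)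
      · exact Or.inr (Or.inr ⟨Or.inl h1, Or.inl (cn_symm h2)⟩)
    · rcases dc_insert_decomp h1 with g | ⟨g1, g2⟩ | ⟨g1, g2⟩ <;>
        rcases dc_insert_decomp h2 with f | ⟨f1, f2⟩ | ⟨f1, f2⟩
      · exact Or.inl (Or.inr ⟨g, f⟩)
      · exact Or.inr (Or.inr ⟨Or.inr ⟨g, f2⟩, Or.inl f1⟩)
      · exact Or.inr (Or.inl ⟨Or.inr ⟨g, f2⟩, Or.inl f1⟩)
      · exact Or.inr (Or.inl ⟨Or.inl g1, Or.inr ⟨f, g2⟩⟩)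
      · -- u ~ a, b depot; v ~ a, b depot : then u ~ v through a
        exact Or.inl (Or.inl (cn_trans g1 (cn_symm f1)))
      · -- u ~ a & DC b ; v ~ b & DC a : u Rel a? u~a: Rel u a := Or.inl g1; v ~ b: Rel v b
        exact Or.inr (Or.inl ⟨Or.inl g1, Or.inl f1⟩)
      · exact Or.inr (Or.inr ⟨Or.inl g1, Or.inr ⟨f, g2⟩⟩)
      · exact Or.inr (Or.inr ⟨Or.inl g1, Or.inl f1⟩)
      · exact Or.inl (Or.inl (cn_trans g1 (cn_symm f1)))
  · intro h
    have hedge : Rel D (insert s(a,b) S) a b := rel_of_edge (Finset.mem_insert_self _ _)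
    have hmono : ∀ x y, Rel D S x y → Rel D (insert s(a,b) S) x y := fun x y =>
      rel_mono (Finset.subset_insert _ _)
    rcases h with h | ⟨h1, h2⟩ | ⟨h1, h2⟩
    · exact hmono _ _ h
    · exact rel_trans (rel_trans (hmono _ _ h1) hedge) (rel_symm (hmono _ _ h2))
    · exact rel_trans (rel_trans (hmono _ _ h1) (rel_symm hedge)) (rel_symm (hmono _ _ h2))

end CSFAux


namespace CSFAux
set_option linter.unusedSectionVars false

variable {V : Type*} [Fintype V] [DecidableEq V] (D : Finset V)

/-- The `Rel`-class of a vertex, as a finset. -/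
noncomputable def cls (S : Finset (Sym2 V)) (v : V) : Finset V :=
  Finset.univ.filter (fun u => Rel D S v u)

/-- Number of `Rel`-classes. -/
noncomputable def qq (S : Finset (Sym2 V)) : ℕ :=
  (Finset.univ.image (cls D S)).card

variable {D}

lemma mem_cls {S : Finset (Sym2 V)} {u v : V} : u ∈ cls D S v ↔ Rel D S v u := by
  simp [cls]

lemma self_mem_cls {S : Finset (Sym2 V)} {v : V} : v ∈ cls D S v :=
  mem_cls.mpr (Rel.refl' S v)

lemma cls_eq_of_rel {S : Finset (Sym2 V)} {u v : V} (h : Rel D S u v) :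
    cls D S u = cls D S v := by
  ext x
  simp only [mem_cls]
  exact ⟨fun hx => rel_trans (rel_symm h) hx, fun hx => rel_trans h hx⟩

lemma rel_of_cls_eq {S : Finset (Sym2 V)} {u v : V} (h : cls D S u = cls D S v) :
    Rel D S u v := by
  have : v ∈ cls D S u := h ▸ self_mem_cls
  exact mem_cls.mp this

lemma cls_eq_iff {S : Finset (Sym2 V)} {u v : V} :
    cls D S u = cls D S v ↔ Rel D S u v := ⟨rel_of_cls_eq, cls_eq_of_rel⟩

lemma qq_insert_of_rel {S : Finset (Sym2 V)} {a b : V} (h : Rel D S a b) :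
    qq D (insert s(a,b) S) = qq D S := by
  have hcls : cls D (insert s(a,b) S) = cls D S := by
    funext v
    ext u
    simp only [mem_cls, rel_insert_iff]
    constructor
    · rintro (g | ⟨g1, g2⟩ | ⟨g1, g2⟩)
      · exact g
      · exact rel_trans (rel_trans g1 h) (rel_symm g2)
      · exact rel_trans (rel_trans g1 (rel_symm h)) (rel_symm g2)
    · exact fun g => Or.inl g
  unfold qq
  rw [hcls]

lemma qq_insert_of_not_rel {S : Finset (Sym2 V)} {a b : V} (h : ¬ Rel D S a b) :
    qq D S = qq D (insert s(a,b) S) + 1 := by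
  set e := s(a,b) with he
  set Ca := cls D S a with hCa
  set Cb := cls D S b with hCb
  set M := Ca ∪ Cb with hM
  have touched_cls : ∀ v, Rel D S v a ∨ Rel D S v b → cls D (insert e S) v = M := by
    intro v hv
    ext u
    simp only [hM, hCa, hCb, Finset.mem_union, mem_cls, he, rel_insert_iff]
    constructor
    · rintro (g | ⟨g1, g2⟩ | ⟨g1, g2⟩)
      · rcases hv with hv | hv
        · exact Or.inl (rel_trans (rel_symm hv) g)
        · exact Or.inr (rel_trans (rel_symm hv) g)
      · exact Or.inr (rel_symm g2)
      · exact Or.inl (rel_symm g2)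
    · rintro (g | g)
      · rcases hv with hv | hv
        · exact Or.inl (rel_trans hv g)
        · exact Or.inr (Or.inr ⟨hv, rel_symm g⟩)
      · rcases hv with hv | hv
        · exact Or.inr (Or.inl ⟨hv, rel_symm g⟩)
        · exact Or.inl (rel_trans hv g)
  have untouched_cls : ∀ v, ¬ Rel D S v a → ¬ Rel D S v b → cls D (insert e S) v = cls D S v := by
    intro v hva hvb
    ext u
    simp only [mem_cls, he, rel_insert_iff]
    constructor
    · rintro (g | ⟨g1, g2⟩ | ⟨g1, g2⟩)
      · exact g
      · exact absurd g1 hva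
      · exact absurd g1 hvb
    · exact fun g => Or.inl g
  have hQ : Finset.univ.image (cls D (insert e S)) =
      insert M ((Finset.univ.image (cls D S)) \ {Ca, Cb}) := by
    ext C
    simp only [Finset.mem_insert, Finset.mem_image, Finset.mem_sdiff, Finset.mem_univ,
      true_and, Finset.mem_singleton]
    constructor
    · rintro ⟨v, rfl⟩
      by_cases hva : Rel D S v a
      · exact Or.inl (touched_cls v (Or.inl hva))
      · by_cases hvb : Rel D S v b
        · exact Or.inl (touched_cls v (Or.inr hvb))
        · refine Or.inr ⟨⟨v, (untouched_cls v hva hvb).symm⟩, ?_⟩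
          rw [untouched_cls v hva hvb]
          push_neg
          constructor
          · intro hc; exact hva (rel_of_cls_eq (hCa ▸ hc))
          · intro hc; exact hvb (rel_of_cls_eq (hCb ▸ hc))
    · rintro (rfl | ⟨⟨v, rfl⟩, hC⟩)
      · exact ⟨a, touched_cls a (Or.inl (Rel.refl' S a))⟩
      · push_neg at hC
        have hva : ¬ Rel D S v a := fun g => hC.1 (hCa ▸ cls_eq_of_rel g)
        have hvb : ¬ Rel D S v b := fun g => hC.2 (hCb ▸ cls_eq_of_rel g)
        exact ⟨v, untouched_cls v hva hvb⟩
  have hCaCb : Ca ≠ Cb := fun hc => h (rel_of_cls_eq hc)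
  have hpair_sub : ({Ca, Cb} : Finset (Finset V)) ⊆ Finset.univ.image (cls D S) := by
    intro C hC
    simp only [Finset.mem_insert, Finset.mem_singleton] at hC
    rcases hC with rfl | rfl
    · exact Finset.mem_image_of_mem _ (Finset.mem_univ a)
    · exact Finset.mem_image_of_mem _ (Finset.mem_univ b)
  have hMnot : M ∉ (Finset.univ.image (cls D S)) \ {Ca, Cb} := by
    intro hc
    rcases Finset.mem_sdiff.mp hc with ⟨hc1, _⟩
    obtain ⟨v, _, hv⟩ := Finset.mem_image.mp hc1
    have hva : a ∈ cls D S v := by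
      rw [hv]; exact Finset.mem_union_left _ self_mem_cls
    have hvb : b ∈ cls D S v := by
      rw [hv]; exact Finset.mem_union_right _ self_mem_cls
    exact h (rel_trans (rel_symm (mem_cls.mp hva)) (mem_cls.mp hvb))
  have hcard2 : ({Ca, Cb} : Finset (Finset V)).card = 2 := by
    rw [Finset.card_insert_of_notMem (by simpa using hCaCb), Finset.card_singleton]
  have h2le : 2 ≤ qq D S := by
    unfold qq
    calc 2 = ({Ca, Cb} : Finset (Finset V)).card := hcard2.symm
    _ ≤ _ := Finset.card_le_card hpair_sub
  unfold qq
  rw [hQ, Finset.card_insert_of_notMem hMnot, Finset.card_sdiff_of_subset hpair_sub, hcard2]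
  unfold qq at h2le
  omega

lemma qq_insert_le (S : Finset (Sym2 V)) (e : Sym2 V) :
    qq D (insert e S) ≤ qq D S := by
  induction e using Sym2.ind with
  | _ a b =>
    by_cases h : Rel D S a b
    · rw [qq_insert_of_rel h]
    · have := qq_insert_of_not_rel h
      omega

lemma qq_le_insert (S : Finset (Sym2 V)) (e : Sym2 V) :
    qq D S ≤ qq D (insert e S) + 1 := by
  induction e using Sym2.ind with
  | _ a b =>
    by_cases h : Rel D S a b
    · rw [qq_insert_of_rel h]; omega
    · exact le_of_eq (qq_insert_of_not_rel h)

lemma qq_union_le (S B : Finset (Sym2 V)) : qq D (S ∪ B) ≤ qq D S := by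
  induction B using Finset.induction_on with
  | empty => rw [Finset.union_empty]
  | insert _ _ hnot ih =>
    rename_i e B
    rw [Finset.union_insert]
    exact le_trans (qq_insert_le _ _) ih

lemma qq_antitone {S S' : Finset (Sym2 V)} (h : S ⊆ S') : qq D S' ≤ qq D S := by
  have := qq_union_le (D := D) S (S' \ S)
  rwa [Finset.union_sdiff_of_subset h] at this

lemma qq_card_bound (A B : Finset (Sym2 V)) : qq D A ≤ qq D (A ∪ B) + B.card := by
  induction B using Finset.induction_on with
  | empty => simp
  | insert _ _ hnot ih =>
    rename_i e B
    rw [Finset.union_insert, Finset.card_insert_of_notMem hnot]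
    have h1 := qq_le_insert (D := D) (A ∪ B) e
    omega

/-- Diminishing returns / submodularity. -/
lemma qq_dim {A B : Finset (Sym2 V)} (P : Finset (Sym2 V)) (hAB : A ⊆ B) :
    qq D (A ∪ P) + qq D B ≤ qq D (B ∪ P) + qq D A := by
  induction P using Finset.induction_on with
  | empty => simp [Nat.add_comm]
  | insert _ _ hnot ih =>
    rename_i e P
    rw [Finset.union_insert, Finset.union_insert]
    induction e using Sym2.ind with
    | _ x y =>
      by_cases hb : Rel D (B ∪ P) x y
      · have h1 : qq D (insert s(x,y) (B ∪ P)) = qq D (B ∪ P) := qq_insert_of_rel hb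
        have h2 : qq D (insert s(x,y) (A ∪ P)) ≤ qq D (A ∪ P) := qq_insert_le _ _
        omega
      · have ha : ¬ Rel D (A ∪ P) x y := fun g =>
          hb (rel_mono (Finset.union_subset_union_left hAB) g)
        have h1 := qq_insert_of_not_rel hb
        have h2 := qq_insert_of_not_rel ha
        omega

end CSFAux


namespace CSFAux
set_option linter.unusedSectionVars false
open Finset

variable {V : Type*} [Fintype V] [DecidableEq V] {D : Finset V}

lemma qq_pos [Nonempty V] (S : Finset (Sym2 V)) : 1 ≤ qq D S := by
  have : (Finset.univ.image (cls D S)).Nonempty :=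
    ⟨cls D S (Classical.arbitrary V), Finset.mem_image_of_mem _ (Finset.mem_univ _)⟩
  exact Finset.card_pos.mpr this

lemma qq_eq_one_of_spanning [Nonempty V] {S : Finset (Sym2 V)} (h : ∀ v, DC D S v) :
    qq D S = 1 := by
  have v₀ := Classical.arbitrary V
  have himg : Finset.univ.image (cls D S) = {cls D S v₀} := by
    ext C
    simp only [Finset.mem_image, Finset.mem_univ, true_and, Finset.mem_singleton]
    constructor
    · rintro ⟨v, rfl⟩
      exact cls_eq_of_rel (Or.inr ⟨h v, h v₀⟩)
    · rintro rfl; exact ⟨v₀, rfl⟩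
  unfold qq
  rw [himg, Finset.card_singleton]

lemma spanning_of_qq_eq_one {S : Finset (Sym2 V)} {d₀ : V} (hd₀ : d₀ ∈ D)
    (h : qq D S = 1) : ∀ v, DC D S v := by
  intro v
  have hcard : (Finset.univ.image (cls D S)).card ≤ 1 := le_of_eq h
  have h1 : cls D S v ∈ Finset.univ.image (cls D S) :=
    Finset.mem_image_of_mem _ (Finset.mem_univ _)
  have h2 : cls D S d₀ ∈ Finset.univ.image (cls D S) :=
    Finset.mem_image_of_mem _ (Finset.mem_univ _)
  have heq : cls D S v = cls D S d₀ := Finset.card_le_one.mp hcard _ h1 _ h2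
  rcases rel_of_cls_eq heq with hcn | ⟨hdc, _⟩
  · exact ⟨d₀, hd₀, hcn⟩
  · exact hdc

/-- Edge-level acyclicity. -/
def AcE (S : Finset (Sym2 V)) : Prop :=
  ∀ a b : V, s(a,b) ∈ S → ¬ Cn (S.erase s(a,b)) a b

lemma acE_mono {T S : Finset (Sym2 V)} (h : T ⊆ S) (hS : AcE S) : AcE T := by
  intro a b hab hcn
  exact hS a b (h hab) (cn_mono (Finset.erase_subset_erase _ h) hcn)

lemma acE_insert {S : Finset (Sym2 V)} {a b : V} (hS : AcE S) (h : ¬ Cn S a b) :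
    AcE (insert s(a,b) S) := by
  have heS : s(a,b) ∉ S := fun hc => h (cn_step hc)
  intro x y hxy
  rcases Finset.mem_insert.mp hxy with he | hmem
  · rw [← he, Finset.erase_insert (he ▸ heS)]
    rcases Sym2.eq_iff.mp he with ⟨rfl, rfl⟩ | ⟨rfl, rfl⟩
    · exact h
    · exact fun g => h (cn_symm g)
  · have hne : s(x,y) ≠ s(a,b) := fun hc => heS (hc ▸ hmem)
    rw [Finset.erase_insert_of_ne (Ne.symm hne)]
    intro hcn
    rcases cn_insert_decomp hcn with g | ⟨g1, g2⟩ | ⟨g1, g2⟩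
    · exact hS x y hmem g
    · have hc1 : Cn S a x := cn_symm (cn_mono (Finset.erase_subset _ _) g1)
      have hc2 : Cn S y b := cn_symm (cn_mono (Finset.erase_subset _ _) g2)
      exact h (cn_trans (cn_trans hc1 (cn_step hmem)) hc2)
    · have hc1 : Cn S b x := cn_symm (cn_mono (Finset.erase_subset _ _) g1)
      have hc2 : Cn S y a := cn_symm (cn_mono (Finset.erase_subset _ _) g2)
      exact h (cn_symm (cn_trans (cn_trans hc1 (cn_step hmem)) hc2))

/-- If adding `Y` to `T` drops the class count by exactly `Y.card`, acyclicity is preserved. -/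
lemma acE_of_additive :
    ∀ (Y T : Finset (Sym2 V)), AcE T → qq D (T ∪ Y) + Y.card = qq D T → AcE (T ∪ Y) := by
  intro Y
  induction Y using Finset.strongInduction with
  | _ Y ih =>
    intro T hT hadd
    rcases Finset.eq_empty_or_nonempty Y with rfl | ⟨y, hyY⟩
    · simpa using hT
    · revert hyY
      induction y using Sym2.ind with
      | _ a b =>
        intro hyY
        set S' := T ∪ Y.erase s(a,b) with hS'
        have hins : T ∪ Y = insert s(a,b) S' := by
          ext f
          simp only [hS', Finset.mem_union, Finset.mem_insert, Finset.mem_erase]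
          constructor
          · rintro (hf | hf)
            · exact Or.inr (Or.inl hf)
            · by_cases hfe : f = s(a,b)
              · exact Or.inl hfe
              · exact Or.inr (Or.inr ⟨hfe, hf⟩)
          · rintro (rfl | hf | ⟨_, hf⟩)
            · exact Or.inr hyY
            · exact Or.inl hf
            · exact Or.inr hf
        have hcard : Y.card = (Y.erase s(a,b)).card + 1 := by
          rw [Finset.card_erase_of_mem hyY]
          have : 1 ≤ Y.card := Finset.card_pos.mpr ⟨_, hyY⟩
          omega
        have hb1 : qq D S' ≤ qq D (T ∪ Y) + 1 := by
          rw [hins]; exact qq_le_insert _ _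
        have hb2 : qq D T ≤ qq D S' + (Y.erase s(a,b)).card := qq_card_bound _ _
        have hforce1 : qq D S' + (Y.erase s(a,b)).card = qq D T := by omega
        have hforce2 : qq D (T ∪ Y) + 1 = qq D S' := by omega
        have hrel : ¬ Rel D S' a b := by
          intro hrel
          have := qq_insert_of_rel hrel
          rw [← hins] at this
          omega
        have hnc : ¬ Cn S' a b := fun g => hrel (Or.inl g)
        have hsub : Y.erase s(a,b) ⊂ Y := Finset.erase_ssubset hyY
        have hS'ac : AcE S' := ih _ hsub T hT hforce1
        rw [hins]
        exact acE_insert hS'ac hnc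

lemma reachable_iff_cn {S : Finset (Sym2 V)} (hdiag : ∀ e ∈ S, ¬ e.IsDiag) (u v : V) :
    (SimpleGraph.fromEdgeSet (↑S : Set (Sym2 V))).Reachable u v ↔ Cn S u v := by
  constructor
  · rintro ⟨w⟩
    induction w with
    | nil => exact Relation.ReflTransGen.refl
    | cons h p ih =>
      rw [SimpleGraph.fromEdgeSet_adj] at h
      exact Relation.ReflTransGen.head (Finset.mem_coe.mp h.1) ih
  · intro h
    induction h with
    | refl => exact SimpleGraph.Reachable.refl _
    | @tail x y _ hstep ih =>
      refine SimpleGraph.Reachable.trans ih (SimpleGraph.Adj.reachable ?_)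
      rw [SimpleGraph.fromEdgeSet_adj]
      refine ⟨Finset.mem_coe.mpr hstep, ?_⟩
      intro hxy
      exact hdiag _ hstep (by rw [hxy]; exact Sym2.mk_isDiag_iff.mpr rfl)

lemma graph_erase_eq {S : Finset (Sym2 V)} {a b : V} :
    (SimpleGraph.fromEdgeSet (↑S : Set (Sym2 V))) \ SimpleGraph.fromEdgeSet {s(a,b)} =
      SimpleGraph.fromEdgeSet (↑(S.erase s(a,b)) : Set (Sym2 V)) := by
  ext x y
  simp only [SimpleGraph.sdiff_adj, SimpleGraph.fromEdgeSet_adj, Finset.mem_coe,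
    Finset.mem_erase, Set.mem_singleton_iff]
  tauto

lemma acyclic_iff_acE {S : Finset (Sym2 V)} (hdiag : ∀ e ∈ S, ¬ e.IsDiag) :
    (SimpleGraph.fromEdgeSet (↑S : Set (Sym2 V))).IsAcyclic ↔ AcE S := by
  have hdiag' : ∀ a b : V, s(a,b) ∈ S → a ≠ b := by
    intro a b hab hc
    exact hdiag _ hab (by rw [hc]; exact Sym2.mk_isDiag_iff.mpr rfl)
  rw [SimpleGraph.isAcyclic_iff_forall_adj_isBridge]
  constructor
  · intro h a b hab
    have hadj : (SimpleGraph.fromEdgeSet (↑S : Set (Sym2 V))).Adj a b :=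
      (SimpleGraph.fromEdgeSet_adj _).mpr ⟨Finset.mem_coe.mpr hab, hdiag' a b hab⟩
    have hbr := h hadj
    rw [SimpleGraph.isBridge_iff, SimpleGraph.deleteEdges, graph_erase_eq] at hbr
    rw [← reachable_iff_cn (fun e he => hdiag e (Finset.mem_of_mem_erase he))]
    exact hbr
  · intro h x y hadj
    rw [SimpleGraph.isBridge_iff, SimpleGraph.deleteEdges, graph_erase_eq]
    rw [reachable_iff_cn (fun e he => hdiag e (Finset.mem_of_mem_erase he))]
    rw [SimpleGraph.fromEdgeSet_adj] at hadj
    exact h x y (Finset.mem_coe.mp hadj.1)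

end CSFAux


namespace CSFAux
set_option linter.unusedSectionVars false
set_option maxHeartbeats 1000000

variable {α : Type*} [DecidableEq α]

lemma fs1 (T W : Finset α) (e : α) : (T ∪ {e}) ∪ W = insert e (T ∪ W) := by
  ext x
  simp only [Finset.mem_union, Finset.mem_insert, Finset.mem_singleton]
  tauto

lemma fs2 (T : Finset α) (e : α) : T ∪ {e} = insert e T := by
  ext x
  simp only [Finset.mem_union, Finset.mem_insert, Finset.mem_singleton]
  tauto

lemma fs3 {E : Finset α} {e : α} (he : e ∈ E) (T : Finset α) :
    T ∪ E = insert e (T ∪ E.erase e) := by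
  ext x
  simp only [Finset.mem_union, Finset.mem_insert, Finset.mem_erase]
  constructor
  · rintro (hx | hx)
    · exact Or.inr (Or.inl hx)
    · by_cases hxe : x = e
      · exact Or.inl hxe
      · exact Or.inr (Or.inr ⟨hxe, hx⟩)
  · rintro (rfl | hx | ⟨_, hx⟩)
    · exact Or.inr he
    · exact Or.inl hx
    · exact Or.inr hx

lemma fs4 {E A : Finset α} {e : α} (he : e ∈ E) (hA : A ⊆ E.erase e) :
    E \ A = insert e (E.erase e \ A) := by
  have heA : e ∉ A := fun hc => (Finset.mem_erase.mp (hA hc)).1 rfl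
  ext x
  simp only [Finset.mem_sdiff, Finset.mem_insert, Finset.mem_erase]
  constructor
  · rintro ⟨hx, hxA⟩
    by_cases hxe : x = e
    · exact Or.inl hxe
    · exact Or.inr ⟨⟨hxe, hx⟩, hxA⟩
  · rintro (rfl | ⟨⟨_, hx⟩, hxA⟩)
    · exact ⟨he, heA⟩
    · exact ⟨hx, hxA⟩

lemma fs4card {E A : Finset α} {e : α} (he : e ∈ E) (hA : A ⊆ E.erase e) :
    (E \ A).card = (E.erase e \ A).card + 1 := by
  rw [fs4 he hA, Finset.card_insert_of_notMem]
  intro hc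
  exact (Finset.mem_erase.mp (Finset.mem_sdiff.mp hc).1).1 rfl

lemma fs5 {E A : Finset α} {e : α} (hA : A ⊆ E.erase e) :
    E.erase e \ A = E \ insert e A := by
  have heA : e ∉ A := fun hc => (Finset.mem_erase.mp (hA hc)).1 rfl
  ext x
  simp only [Finset.mem_sdiff, Finset.mem_erase, Finset.mem_insert]
  tauto

lemma fs6 {E A B : Finset α} (hB : B ⊆ A) (hA : A ⊆ E) :
    (E \ B).card = (A \ B).card + (E \ A).card := by
  have : E \ B = (A \ B) ∪ (E \ A) := by
    ext x
    simp only [Finset.mem_sdiff, Finset.mem_union]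
    constructor
    · rintro ⟨hx, hxB⟩
      by_cases hxA : x ∈ A
      · exact Or.inl ⟨hxA, hxB⟩
      · exact Or.inr ⟨hx, hxA⟩
    · rintro (⟨hx, hxB⟩ | ⟨hx, hxA⟩)
      · exact ⟨hA hx, hxB⟩
      · exact ⟨hx, fun hc => hxA (hB hc)⟩
  rw [this, Finset.card_union_of_disjoint]
  rw [Finset.disjoint_left]
  intro x hx1 hx2
  rw [Finset.mem_sdiff] at hx1 hx2
  exact hx2.2 hx1.1

lemma fs7 {E A : Finset α} (hA : A ⊆ E) (T : Finset α) :
    (T ∪ A) ∪ (E \ A) = T ∪ E := by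
  rw [Finset.union_assoc, Finset.union_sdiff_of_subset hA]

lemma fs8 (E A S : Finset α) : (E \ A) \ S = E \ (A ∪ S) := by
  ext x
  simp only [Finset.mem_sdiff, Finset.mem_union]
  tauto

lemma fs9 {E : Finset α} {e : α} (he : e ∈ E) : E \ E.erase e = {e} := by
  ext x
  simp only [Finset.mem_sdiff, Finset.mem_erase, Finset.mem_singleton]
  constructor
  · rintro ⟨hx, hne⟩
    by_contra hxe
    exact hne ⟨hxe, hx⟩
  · rintro rfl
    exact ⟨he, fun hc => hc.1 rfl⟩

variable {V : Type*} [Fintype V] [DecidableEq V] {D : Finset V}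

/-- Core matroid-union style lemma for the class-counting rank. -/
lemma core : ∀ (n : ℕ) (E T X : Finset (Sym2 V)), E.card ≤ n →
    (∀ A ⊆ E, qq D (T ∪ A) + qq D (X ∪ A) ≤ (E \ A).card + qq D (T ∪ E) + qq D (X ∪ E)) →
    ∃ Y₁ Y₂ : Finset (Sym2 V), Y₁ ⊆ E ∧ Y₂ ⊆ E ∧ Y₁ ∩ Y₂ = ∅ ∧
      qq D (T ∪ Y₁) + Y₁.card = qq D T ∧ qq D (T ∪ Y₁) = qq D (T ∪ E) ∧
      qq D (X ∪ Y₂) + Y₂.card = qq D X ∧ qq D (X ∪ Y₂) = qq D (X ∪ E) := by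
  intro n
  induction n with
  | zero =>
    intro E T X hcard _
    have hE : E = ∅ := Finset.card_eq_zero.mp (Nat.le_zero.mp hcard)
    subst hE
    exact ⟨∅, ∅, Finset.Subset.refl _, Finset.Subset.refl _, by simp, by simp, by simp,
      by simp, by simp⟩
  | succ n ih =>
    intro E T X hcard hcond
    rcases Finset.eq_empty_or_nonempty E with rfl | ⟨e, heE⟩
    · exact ⟨∅, ∅, Finset.Subset.refl _, Finset.Subset.refl _, by simp, by simp, by simp,
        by simp, by simp⟩
    revert heE
    induction e using Sym2.ind with
    | _ a b =>
    intro heE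
    set e := s(a,b) with hedef
    set E' := E.erase e with hE'def
    have hE'sub : E' ⊆ E := Finset.erase_subset _ _
    have hE'card : E'.card ≤ n := by
      rw [hE'def, Finset.card_erase_of_mem heE]
      omega
    have heE' : e ∉ E' := by simp [hE'def]
    have hfs3T : T ∪ E = insert e (T ∪ E') := by rw [hE'def]; exact fs3 heE T
    have hfs3X : X ∪ E = insert e (X ∪ E') := by rw [hE'def]; exact fs3 heE X
    have hfs9 : E \ E' = {e} := by rw [hE'def]; exact fs9 heE
    have hfs4card : ∀ A ⊆ E', (E \ A).card = (E' \ A).card + 1 := by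
      intro A hA
      rw [hE'def] at hA ⊢
      exact fs4card heE hA
    have hfs5 : ∀ A ⊆ E', E' \ A = E \ insert e A := by
      intro A hA
      rw [hE'def] at hA ⊢
      exact fs5 hA
    -- basic rank bounds for removing e
    have h1le : qq D (T ∪ E) ≤ qq D (T ∪ E') := qq_antitone (Finset.union_subset_union_right hE'sub)
    have h1ge : qq D (T ∪ E') ≤ qq D (T ∪ E) + 1 := by
      rw [hfs3T]; exact qq_le_insert _ _
    have h2le : qq D (X ∪ E) ≤ qq D (X ∪ E') := qq_antitone (Finset.union_subset_union_right hE'sub)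
    have h2ge : qq D (X ∪ E') ≤ qq D (X ∪ E) + 1 := by
      rw [hfs3X]; exact qq_le_insert _ _
    by_cases hj : qq D (insert e T) = qq D T ∧ qq D (insert e X) = qq D X
    · -- junk element: delete it
      have hrelT : Rel D T a b := by
        by_contra hc
        have := qq_insert_of_not_rel (D := D) (S := T) hc
        rw [← hedef] at this
        omega
      have hrelX : Rel D X a b := by
        by_contra hc
        have := qq_insert_of_not_rel (D := D) (S := X) hc
        rw [← hedef] at this
        omega
      have hjT : ∀ W : Finset (Sym2 V), qq D (insert e (T ∪ W)) = qq D (T ∪ W) := by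
        intro W
        rw [hedef]
        exact qq_insert_of_rel (rel_mono Finset.subset_union_left hrelT)
      have hjX : ∀ W : Finset (Sym2 V), qq D (insert e (X ∪ W)) = qq D (X ∪ W) := by
        intro W
        rw [hedef]
        exact qq_insert_of_rel (rel_mono Finset.subset_union_left hrelX)
      have hq1 : qq D (T ∪ E') = qq D (T ∪ E) := by
        rw [hfs3T, hjT E']
      have hq2 : qq D (X ∪ E') = qq D (X ∪ E) := by
        rw [hfs3X, hjX E']
      have hcond' : ∀ A ⊆ E', qq D (T ∪ A) + qq D (X ∪ A) ≤
          (E' \ A).card + qq D (T ∪ E') + qq D (X ∪ E') := by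
        intro A hA
        have hins : insert e A ⊆ E := Finset.insert_subset heE (hA.trans hE'sub)
        have hgiven := hcond (insert e A) hins
        have e1 : T ∪ insert e A = insert e (T ∪ A) := by rw [Finset.union_insert]
        have e2 : X ∪ insert e A = insert e (X ∪ A) := by rw [Finset.union_insert]
        rw [e1, e2, hjT A, hjX A, ← hfs5 A hA] at hgiven
        omega
      obtain ⟨Y₁, Y₂, hY1, hY2, hdisj, ha1, ha2, hb1, hb2⟩ := ih E' T X hE'card hcond'
      exact ⟨Y₁, Y₂, hY1.trans hE'sub, hY2.trans hE'sub, hdisj, ha1, by rw [ha2, hq1],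
        hb1, by rw [hb2, hq2]⟩
    · by_cases hco1 : qq D (T ∪ E') = qq D (T ∪ E) + 1
      · -- e is a side-1 coloop : force it into side 1
        have hgivenE' := hcond E' hE'sub
        rw [hfs9] at hgivenE'
        have hq2 : qq D (X ∪ E') = qq D (X ∪ E) := by
          simp only [Finset.card_singleton] at hgivenE'
          omega
        have hnrelE' : ¬ Rel D (T ∪ E') a b := by
          intro hc
          have := qq_insert_of_rel (D := D) hc
          rw [← hedef, ← hfs3T] at this
          omega
        have hdropT : ∀ A ⊆ E', qq D (T ∪ A) = qq D (insert e (T ∪ A)) + 1 := by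
          intro A hA
          have : ¬ Rel D (T ∪ A) a b := fun hc =>
            hnrelE' (rel_mono (Finset.union_subset_union_right hA) hc)
          have h := qq_insert_of_not_rel (D := D) this
          rw [← hedef] at h
          exact h
        have hnrelT : ¬ Rel D T a b := fun hc =>
          hnrelE' (rel_mono Finset.subset_union_left hc)
        have hqTe : qq D T = qq D (insert e T) + 1 := by
          have h := qq_insert_of_not_rel (D := D) hnrelT
          rw [← hedef] at h
          exact h
        have hcond' : ∀ A ⊆ E', qq D ((T ∪ {e}) ∪ A) + qq D (X ∪ A) ≤
            (E' \ A).card + qq D ((T ∪ {e}) ∪ E') + qq D (X ∪ E') := by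
          intro A hA
          rw [fs1, fs1, ← hfs3T, hq2]
          have hgiven := hcond A (hA.trans hE'sub)
          have hdrop := hdropT A hA
          have hcardA := hfs4card A hA
          omega
        obtain ⟨Y₁', Y₂, hY1, hY2, hdisj, ha1, ha2, hb1, hb2⟩ :=
          ih E' (T ∪ {e}) X hE'card hcond'
        refine ⟨insert e Y₁', Y₂, ?_, hY2.trans hE'sub, ?_, ?_, ?_, hb1, by rw [hb2, hq2]⟩
        · exact Finset.insert_subset heE (hY1.trans hE'sub)
        · ext x
          simp only [Finset.mem_inter, Finset.mem_insert, Finset.notMem_empty, iff_false]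
          rintro ⟨(rfl | hx1), hx2⟩
          · exact heE' (hY2 hx2)
          · have : x ∈ Y₁' ∩ Y₂ := Finset.mem_inter.mpr ⟨hx1, hx2⟩
            rw [hdisj] at this
            exact Finset.notMem_empty _ this
        · have heY1' : e ∉ Y₁' := fun hc => heE' (hY1 hc)
          have hTins : T ∪ insert e Y₁' = (T ∪ {e}) ∪ Y₁' := by
            rw [fs1, Finset.union_insert]
          rw [hTins, Finset.card_insert_of_notMem heY1']
          have hqTe' : qq D T = qq D (T ∪ {e}) + 1 := by rw [fs2]; exact hqTe
          omega
        · have hTins : T ∪ insert e Y₁' = (T ∪ {e}) ∪ Y₁' := by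
            rw [fs1, Finset.union_insert]
          rw [hTins, ha2, fs1, ← hfs3T]
      · by_cases hco2 : qq D (X ∪ E') = qq D (X ∪ E) + 1
        · -- e is a side-2 coloop : force it into side 2
          have hgivenE' := hcond E' hE'sub
          rw [hfs9] at hgivenE'
          have hq1 : qq D (T ∪ E') = qq D (T ∪ E) := by
            simp only [Finset.card_singleton] at hgivenE'
            omega
          have hnrelE' : ¬ Rel D (X ∪ E') a b := by
            intro hc
            have := qq_insert_of_rel (D := D) hc
            rw [← hedef, ← hfs3X] at this
            omega
          have hdropX : ∀ A ⊆ E', qq D (X ∪ A) = qq D (insert e (X ∪ A)) + 1 := by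
            intro A hA
            have : ¬ Rel D (X ∪ A) a b := fun hc =>
              hnrelE' (rel_mono (Finset.union_subset_union_right hA) hc)
            have h := qq_insert_of_not_rel (D := D) this
            rw [← hedef] at h
            exact h
          have hnrelX : ¬ Rel D X a b := fun hc =>
            hnrelE' (rel_mono Finset.subset_union_left hc)
          have hqXe : qq D X = qq D (insert e X) + 1 := by
            have h := qq_insert_of_not_rel (D := D) hnrelX
            rw [← hedef] at h
            exact h
          have hcond' : ∀ A ⊆ E', qq D (T ∪ A) + qq D ((X ∪ {e}) ∪ A) ≤
              (E' \ A).card + qq D (T ∪ E') + qq D ((X ∪ {e}) ∪ E') := by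
            intro A hA
            rw [fs1, fs1, ← hfs3X, hq1]
            have hgiven := hcond A (hA.trans hE'sub)
            have hdrop := hdropX A hA
            have hcardA := hfs4card A hA
            omega
          obtain ⟨Y₁, Y₂', hY1, hY2, hdisj, ha1, ha2, hb1, hb2⟩ :=
            ih E' T (X ∪ {e}) hE'card hcond'
          refine ⟨Y₁, insert e Y₂', hY1.trans hE'sub, ?_, ?_, ha1, by rw [ha2, hq1], ?_, ?_⟩
          · exact Finset.insert_subset heE (hY2.trans hE'sub)
          · ext x
            simp only [Finset.mem_inter, Finset.mem_insert, Finset.notMem_empty, iff_false]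
            rintro ⟨hx1, (rfl | hx2)⟩
            · exact heE' (hY1 hx1)
            · have : x ∈ Y₁ ∩ Y₂' := Finset.mem_inter.mpr ⟨hx1, hx2⟩
              rw [hdisj] at this
              exact Finset.notMem_empty _ this
          · have heY2' : e ∉ Y₂' := fun hc => heE' (hY2 hc)
            have hXins : X ∪ insert e Y₂' = (X ∪ {e}) ∪ Y₂' := by
              rw [fs1, Finset.union_insert]
            rw [hXins, Finset.card_insert_of_notMem heY2']
            have hqXe' : qq D X = qq D (X ∪ {e}) + 1 := by rw [fs2]; exact hqXe
            omega
          · have hXins : X ∪ insert e Y₂' = (X ∪ {e}) ∪ Y₂' := by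
              rw [fs1, Finset.union_insert]
            rw [hXins, hb2, fs1, ← hfs3X]
        · -- no coloops
          have hq1 : qq D (T ∪ E') = qq D (T ∪ E) := by omega
          have hq2 : qq D (X ∪ E') = qq D (X ∪ E) := by omega
          by_cases hsplit : ∃ A, A ⊆ E ∧ A.Nonempty ∧ A ≠ E ∧
              (E \ A).card + qq D (T ∪ E) + qq D (X ∪ E) = qq D (T ∪ A) + qq D (X ∪ A)
          · -- split along a tight set
            obtain ⟨A, hAE, hAne, hAneE, htight⟩ := hsplit
            have hAcard : A.card ≤ n := by
              have h1 : A.card < E.card := Finset.card_lt_card (hAE.ssubset_of_ne hAneE)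
              omega
            have hEAcard : (E \ A).card ≤ n := by
              have h1 : (E \ A).card = E.card - A.card := Finset.card_sdiff_of_subset hAE
              have h2 : 0 < A.card := Finset.card_pos.mpr hAne
              have h3 : A.card ≤ E.card := Finset.card_le_card hAE
              omega
            -- inner instance
            have hcondIn : ∀ B ⊆ A, qq D (T ∪ B) + qq D (X ∪ B) ≤
                (A \ B).card + qq D (T ∪ A) + qq D (X ∪ A) := by
              intro B hB
              have hgiven := hcond B (hB.trans hAE)
              have hc6 := fs6 hB hAE
              omega
            obtain ⟨Ya₁, Ya₂, hYa1, hYa2, hdisjA, hia1, hia2, hib1, hib2⟩ :=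
              ih A T X hAcard hcondIn
            -- outer instance
            have hcondOut : ∀ S ⊆ E \ A, qq D ((T ∪ A) ∪ S) + qq D ((X ∪ A) ∪ S) ≤
                ((E \ A) \ S).card + qq D ((T ∪ A) ∪ (E \ A)) + qq D ((X ∪ A) ∪ (E \ A)) := by
              intro S hS
              have hsub : A ∪ S ⊆ E := by
                apply Finset.union_subset hAE
                exact hS.trans (Finset.sdiff_subset)
              have hgiven := hcond (A ∪ S) hsub
              rw [fs7 hAE T, fs7 hAE X, fs8]
              rw [← Finset.union_assoc, ← Finset.union_assoc] at hgiven
              omega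
            obtain ⟨Z₁, Z₂, hZ1, hZ2, hdisjZ, hoa1, hoa2, hob1, hob2⟩ :=
              ih (E \ A) (T ∪ A) (X ∪ A) hEAcard hcondOut
            rw [fs7 hAE T] at hoa2
            rw [fs7 hAE X] at hob2
            -- combine
            have hZ1A : ∀ x ∈ Z₁, x ∉ A := fun x hx hc =>
              (Finset.mem_sdiff.mp (hZ1 hx)).2 hc
            have hZ2A : ∀ x ∈ Z₂, x ∉ A := fun x hx hc =>
              (Finset.mem_sdiff.mp (hZ2 hx)).2 hc
            have hcY1 : (Ya₁ ∪ Z₁).card = Ya₁.card + Z₁.card := by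
              rw [Finset.card_union_of_disjoint]
              rw [Finset.disjoint_left]
              exact fun x hx hc => hZ1A x hc (hYa1 hx)
            have hcY2 : (Ya₂ ∪ Z₂).card = Ya₂.card + Z₂.card := by
              rw [Finset.card_union_of_disjoint]
              rw [Finset.disjoint_left]
              exact fun x hx hc => hZ2A x hc (hYa2 hx)
            -- rank equalities, side 1
            have hdim1 : qq D ((T ∪ Ya₁) ∪ Z₁) + qq D (T ∪ A) ≤
                qq D ((T ∪ A) ∪ Z₁) + qq D (T ∪ Ya₁) :=
              qq_dim Z₁ (Finset.union_subset_union_right hYa1)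
            have hup1 : qq D (T ∪ (Ya₁ ∪ Z₁)) ≤ qq D (T ∪ E) := by
              rw [← Finset.union_assoc]
              omega
            have hlow1 : qq D (T ∪ E) ≤ qq D (T ∪ (Ya₁ ∪ Z₁)) := by
              apply qq_antitone
              apply Finset.union_subset_union_right
              apply Finset.union_subset (hYa1.trans hAE) (hZ1.trans Finset.sdiff_subset)
            have hr1 : qq D (T ∪ (Ya₁ ∪ Z₁)) = qq D (T ∪ E) := le_antisymm hup1 hlow1
            have hr1card : qq D (T ∪ (Ya₁ ∪ Z₁)) + (Ya₁ ∪ Z₁).card = qq D T := by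
              rw [hr1, hcY1]
              omega
            -- rank equalities, side 2
            have hdim2 : qq D ((X ∪ Ya₂) ∪ Z₂) + qq D (X ∪ A) ≤
                qq D ((X ∪ A) ∪ Z₂) + qq D (X ∪ Ya₂) :=
              qq_dim Z₂ (Finset.union_subset_union_right hYa2)
            have hup2 : qq D (X ∪ (Ya₂ ∪ Z₂)) ≤ qq D (X ∪ E) := by
              rw [← Finset.union_assoc]
              omega
            have hlow2 : qq D (X ∪ E) ≤ qq D (X ∪ (Ya₂ ∪ Z₂)) := by
              apply qq_antitone
              apply Finset.union_subset_union_right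
              apply Finset.union_subset (hYa2.trans hAE) (hZ2.trans Finset.sdiff_subset)
            have hr2 : qq D (X ∪ (Ya₂ ∪ Z₂)) = qq D (X ∪ E) := le_antisymm hup2 hlow2
            have hr2card : qq D (X ∪ (Ya₂ ∪ Z₂)) + (Ya₂ ∪ Z₂).card = qq D X := by
              rw [hr2, hcY2]
              omega
            refine ⟨Ya₁ ∪ Z₁, Ya₂ ∪ Z₂, ?_, ?_, ?_, hr1card, hr1, hr2card, hr2⟩
            · exact Finset.union_subset (hYa1.trans hAE) (hZ1.trans Finset.sdiff_subset)
            · exact Finset.union_subset (hYa2.trans hAE) (hZ2.trans Finset.sdiff_subset)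
            · ext x
              simp only [Finset.mem_inter, Finset.mem_union, Finset.notMem_empty, iff_false]
              rintro ⟨(h1 | h1), (h2 | h2)⟩
              · have : x ∈ Ya₁ ∩ Ya₂ := Finset.mem_inter.mpr ⟨h1, h2⟩
                rw [hdisjA] at this
                exact Finset.notMem_empty _ this
              · exact hZ2A x h2 (hYa1 h1)
              · exact hZ1A x h1 (hYa2 h2)
              · have : x ∈ Z₁ ∩ Z₂ := Finset.mem_inter.mpr ⟨h1, h2⟩
                rw [hdisjZ] at this
                exact Finset.notMem_empty _ this
          · push_neg at hsplit
            have hnotight : ∀ A ⊆ E', qq D (T ∪ A) + qq D (X ∪ A) + 1 ≤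
                (E \ A).card + qq D (T ∪ E) + qq D (X ∪ E) ∨
                (A = ∅ ∧ (E \ A).card + qq D (T ∪ E) + qq D (X ∪ E) =
                  qq D (T ∪ A) + qq D (X ∪ A)) := by
              intro A hA
              have hgiven := hcond A (hA.trans hE'sub)
              rcases Finset.eq_empty_or_nonempty A with rfl | hAne
              · by_cases hz : (E \ ∅).card + qq D (T ∪ E) + qq D (X ∪ E) =
                    qq D (T ∪ ∅) + qq D (X ∪ ∅)
                · exact Or.inr ⟨rfl, hz⟩
                · left; omega
              · have hAneE : A ≠ E := by
                  intro hc
                  subst hc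
                  exact heE' (hA heE)
                have := hsplit A (hA.trans hE'sub) hAne hAneE
                left; omega
            by_cases hzt : (E \ (∅ : Finset (Sym2 V))).card + qq D (T ∪ E) + qq D (X ∪ E) =
                qq D (T ∪ ∅) + qq D (X ∪ ∅)
            · -- empty set tight : contract e into one of the sides
              have hznice : E.card + qq D (T ∪ E) + qq D (X ∪ E) = qq D T + qq D X := by
                simpa using hzt
              -- e is not junk : some side has rank 1
              have hbT1 : qq D (insert e T) ≤ qq D T := by
                rw [hedef]
                by_cases h : Rel D T a b
                · rw [qq_insert_of_rel h]
                · have := qq_insert_of_not_rel (D := D) (S := T) h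
                  omega
              have hbT2 : qq D T ≤ qq D (insert e T) + 1 := by
                rw [hedef]
                by_cases h : Rel D T a b
                · rw [qq_insert_of_rel h]; omega
                · exact le_of_eq (qq_insert_of_not_rel h)
              have hbX1 : qq D (insert e X) ≤ qq D X := by
                rw [hedef]
                by_cases h : Rel D X a b
                · rw [qq_insert_of_rel h]
                · have := qq_insert_of_not_rel (D := D) (S := X) h
                  omega
              have hbX2 : qq D X ≤ qq D (insert e X) + 1 := by
                rw [hedef]
                by_cases h : Rel D X a b
                · rw [qq_insert_of_rel h]; omega
                · exact le_of_eq (qq_insert_of_not_rel h)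
              by_cases hr1 : qq D T = qq D (insert e T) + 1
              · -- contract into side 1
                have hcond' : ∀ A ⊆ E', qq D ((T ∪ {e}) ∪ A) + qq D (X ∪ A) ≤
                    (E' \ A).card + qq D ((T ∪ {e}) ∪ E') + qq D (X ∪ E') := by
                  intro A hA
                  rw [fs1, fs1, ← hfs3T, hq2]
                  have hcardA := hfs4card A hA
                  have hqins : qq D (insert e (T ∪ A)) ≤ qq D (T ∪ A) := by
                    rw [hedef]
                    by_cases h : Rel D (T ∪ A) a b
                    · rw [qq_insert_of_rel h]
                    · have := qq_insert_of_not_rel (D := D) (S := T ∪ A) h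
                      omega
                  rcases hnotight A hA with hstrict | ⟨rfl, _⟩
                  · omega
                  · -- A = ∅
                    simp only [Finset.union_empty, Finset.sdiff_empty]
                    have hE'c : E'.card + 1 = E.card := by
                      rw [hE'def, Finset.card_erase_of_mem heE]
                      have : 1 ≤ E.card := Finset.card_pos.mpr ⟨e, heE⟩
                      omega
                    omega
                obtain ⟨Y₁', Y₂, hY1, hY2, hdisj, ha1, ha2, hb1, hb2⟩ :=
                  ih E' (T ∪ {e}) X hE'card hcond'
                refine ⟨insert e Y₁', Y₂, ?_, hY2.trans hE'sub, ?_, ?_, ?_, hb1,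
                  by rw [hb2, hq2]⟩
                · exact Finset.insert_subset heE (hY1.trans hE'sub)
                · ext x
                  simp only [Finset.mem_inter, Finset.mem_insert, Finset.notMem_empty, iff_false]
                  rintro ⟨(rfl | hx1), hx2⟩
                  · exact heE' (hY2 hx2)
                  · have : x ∈ Y₁' ∩ Y₂ := Finset.mem_inter.mpr ⟨hx1, hx2⟩
                    rw [hdisj] at this
                    exact Finset.notMem_empty _ this
                · have heY1' : e ∉ Y₁' := fun hc => heE' (hY1 hc)
                  have hTins : T ∪ insert e Y₁' = (T ∪ {e}) ∪ Y₁' := by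
                    rw [fs1, Finset.union_insert]
                  rw [hTins, Finset.card_insert_of_notMem heY1']
                  have hr1' : qq D T = qq D (T ∪ {e}) + 1 := by rw [fs2]; exact hr1
                  omega
                · have hTins : T ∪ insert e Y₁' = (T ∪ {e}) ∪ Y₁' := by
                    rw [fs1, Finset.union_insert]
                  rw [hTins, ha2, fs1, ← hfs3T]
              · -- side 1 rank of e is 0 ; then side 2 rank must be 1
                have hr2 : qq D X = qq D (insert e X) + 1 := by
                  rcases not_and_or.mp hj with hc | hc
                  · omega
                  · omega
                have hcond' : ∀ A ⊆ E', qq D (T ∪ A) + qq D ((X ∪ {e}) ∪ A) ≤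
                    (E' \ A).card + qq D (T ∪ E') + qq D ((X ∪ {e}) ∪ E') := by
                  intro A hA
                  rw [fs1, fs1, ← hfs3X, hq1]
                  have hcardA := hfs4card A hA
                  have hqins : qq D (insert e (X ∪ A)) ≤ qq D (X ∪ A) := by
                    rw [hedef]
                    by_cases h : Rel D (X ∪ A) a b
                    · rw [qq_insert_of_rel h]
                    · have := qq_insert_of_not_rel (D := D) (S := X ∪ A) h
                      omega
                  rcases hnotight A hA with hstrict | ⟨rfl, _⟩
                  · omega
                  · simp only [Finset.union_empty, Finset.sdiff_empty]
                    have hE'c : E'.card + 1 = E.card := by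
                      rw [hE'def, Finset.card_erase_of_mem heE]
                      have : 1 ≤ E.card := Finset.card_pos.mpr ⟨e, heE⟩
                      omega
                    omega
                obtain ⟨Y₁, Y₂', hY1, hY2, hdisj, ha1, ha2, hb1, hb2⟩ :=
                  ih E' T (X ∪ {e}) hE'card hcond'
                refine ⟨Y₁, insert e Y₂', hY1.trans hE'sub, ?_, ?_, ha1,
                  by rw [ha2, hq1], ?_, ?_⟩
                · exact Finset.insert_subset heE (hY2.trans hE'sub)
                · ext x
                  simp only [Finset.mem_inter, Finset.mem_insert, Finset.notMem_empty, iff_false]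
                  rintro ⟨hx1, (rfl | hx2)⟩
                  · exact heE' (hY1 hx1)
                  · have : x ∈ Y₁ ∩ Y₂' := Finset.mem_inter.mpr ⟨hx1, hx2⟩
                    rw [hdisj] at this
                    exact Finset.notMem_empty _ this
                · have heY2' : e ∉ Y₂' := fun hc => heE' (hY2 hc)
                  have hXins : X ∪ insert e Y₂' = (X ∪ {e}) ∪ Y₂' := by
                    rw [fs1, Finset.union_insert]
                  rw [hXins, Finset.card_insert_of_notMem heY2']
                  have hr2' : qq D X = qq D (X ∪ {e}) + 1 := by rw [fs2]; exact hr2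
                  omega
                · have hXins : X ∪ insert e Y₂' = (X ∪ {e}) ∪ Y₂' := by
                    rw [fs1, Finset.union_insert]
                  rw [hXins, hb2, fs1, ← hfs3X]
            · -- nothing tight : delete e
              have hcond' : ∀ A ⊆ E', qq D (T ∪ A) + qq D (X ∪ A) ≤
                  (E' \ A).card + qq D (T ∪ E') + qq D (X ∪ E') := by
                intro A hA
                rw [hq1, hq2]
                have hcardA := hfs4card A hA
                rcases hnotight A hA with hstrict | ⟨rfl, hteq⟩
                · omega
                · exact absurd hteq hzt
              obtain ⟨Y₁, Y₂, hY1, hY2, hdisj, ha1, ha2, hb1, hb2⟩ :=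
                ih E' T X hE'card hcond'
              exact ⟨Y₁, Y₂, hY1.trans hE'sub, hY2.trans hE'sub, hdisj, ha1,
                by rw [ha2, hq1], hb1, by rw [hb2, hq2]⟩

end CSFAux


namespace CSFAux
set_option linter.unusedSectionVars false

variable {V : Type*} [Fintype V] [DecidableEq V] {D : Finset V}

lemma isCSF_parts {S : Finset (Sym2 V)} (hdiag : ∀ e ∈ S, ¬ e.IsDiag)
    (hac : AcE S) (hspan : ∀ v, DC D S v) :
    (∀ e ∈ S, ¬ e.IsDiag) ∧
      (SimpleGraph.fromEdgeSet (↑S : Set (Sym2 V))).IsAcyclic ∧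
      ∀ v, ∃ d ∈ D, Cn S v d :=
  ⟨hdiag, (acyclic_iff_acE hdiag).mpr hac, hspan⟩

end CSFAux

theorem stmt5 {V : Type*} [Fintype V] [DecidableEq V] (D : Finset V)
    (w : Sym2 V → ℝ) (hw : ∀ e, 0 ≤ w e)
    (F F' X : Finset (Sym2 V))
    (hF : IsCSF D F) (hFmin : ∀ F₂, IsCSF D F₂ → ∑ e ∈ F, w e ≤ ∑ e ∈ F₂, w e)
    (hF' : IsCSF D F') (hX : X ⊆ F) (hdisj : F' ∩ X = ∅) :
    ∃ A ⊆ F', IsCSF D ((F \ X) ∪ A) ∧ ∑ e ∈ (F \ X) ∪ A, w e ≤ ∑ e ∈ F', w e := by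
  classical
  open CSFAux in
  rcases isEmpty_or_nonempty V with hve | hvne
  · -- V empty : everything is the empty graph
    have hall : ∀ S : Finset (Sym2 V), S = ∅ := by
      intro S
      apply Finset.eq_empty_of_forall_notMem
      intro e _
      induction e using Sym2.ind with
      | _ x y => exact isEmptyElim x
    refine ⟨∅, Finset.empty_subset _, ?_, ?_⟩
    · rw [Finset.union_empty, hall (F \ X)]
      refine ⟨by simp, ?_, fun v => isEmptyElim v⟩
      rw [Finset.coe_empty, SimpleGraph.fromEdgeSet_empty]
      exact SimpleGraph.isAcyclic_bot
    · rw [Finset.union_empty, hall (F \ X), hall F']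
  · -- main case
    obtain ⟨d₀, hd₀D, _⟩ := hF.2.2 (Classical.arbitrary V)
    set T := F \ X with hTdef
    have hTXF : T ∪ X = F := Finset.sdiff_union_of_subset hX
    have hTF : T ⊆ F := Finset.sdiff_subset
    have spanF : ∀ v, CSFAux.DC D F v := fun v => hF.2.2 v
    have spanF' : ∀ v, CSFAux.DC D F' v := fun v => hF'.2.2 v
    have hqF' : CSFAux.qq D F' = 1 := CSFAux.qq_eq_one_of_spanning spanF'
    have hqTF' : CSFAux.qq D (T ∪ F') = 1 :=
      CSFAux.qq_eq_one_of_spanning (fun v => CSFAux.dc_mono Finset.subset_union_right (spanF' v))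
    have hqXF' : CSFAux.qq D (X ∪ F') = 1 :=
      CSFAux.qq_eq_one_of_spanning (fun v => CSFAux.dc_mono Finset.subset_union_right (spanF' v))
    have hcond : ∀ A ⊆ F', CSFAux.qq D (T ∪ A) + CSFAux.qq D (X ∪ A) ≤
        (F' \ A).card + CSFAux.qq D (T ∪ F') + CSFAux.qq D (X ∪ F') := by
      intro A hA
      have hdim : CSFAux.qq D (A ∪ T) + CSFAux.qq D (X ∪ A) ≤
          CSFAux.qq D ((X ∪ A) ∪ T) + CSFAux.qq D A :=
        CSFAux.qq_dim T Finset.subset_union_right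
      have hcomm : A ∪ T = T ∪ A := Finset.union_comm _ _
      rw [hcomm] at hdim
      have hspanXAT : CSFAux.qq D ((X ∪ A) ∪ T) = 1 := by
        apply CSFAux.qq_eq_one_of_spanning
        intro v
        apply CSFAux.dc_mono (show F ⊆ (X ∪ A) ∪ T from ?_) (spanF v)
        rw [← hTXF]
        intro x hx
        rcases Finset.mem_union.mp hx with hx | hx
        · exact Finset.mem_union_right _ hx
        · exact Finset.mem_union_left _ (Finset.mem_union_left _ hx)
      have hbound : CSFAux.qq D A ≤ 1 + (F' \ A).card := by
        have h1 := CSFAux.qq_card_bound (D := D) A (F' \ A)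
        rw [Finset.union_sdiff_of_subset hA, hqF'] at h1
        omega
      rw [hspanXAT] at hdim
      rw [hqTF', hqXF']
      omega
    obtain ⟨Y₁, Y₂, hY1, hY2, hdisjY, ha1, ha2, hb1, hb2⟩ :=
      CSFAux.core F'.card F' T X le_rfl hcond
    -- diag-freeness
    have hdiagF : ∀ e ∈ F, ¬ e.IsDiag := hF.1
    have hdiagF' : ∀ e ∈ F', ¬ e.IsDiag := hF'.1
    have hdiagTY : ∀ e ∈ T ∪ Y₁, ¬ e.IsDiag := by
      intro e he
      rcases Finset.mem_union.mp he with he | he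
      · exact hdiagF e (hTF he)
      · exact hdiagF' e (hY1 he)
    have hdiagXY : ∀ e ∈ X ∪ Y₂, ¬ e.IsDiag := by
      intro e he
      rcases Finset.mem_union.mp he with he | he
      · exact hdiagF e (hX he)
      · exact hdiagF' e (hY2 he)
    -- acyclic parts
    have hacF : CSFAux.AcE F := (CSFAux.acyclic_iff_acE hdiagF).mp hF.2.1
    have hacT : CSFAux.AcE T := CSFAux.acE_mono hTF hacF
    have hacX : CSFAux.AcE X := CSFAux.acE_mono hX hacF
    have hacTY : CSFAux.AcE (T ∪ Y₁) := CSFAux.acE_of_additive Y₁ T hacT ha1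
    have hacXY : CSFAux.AcE (X ∪ Y₂) := CSFAux.acE_of_additive Y₂ X hacX hb1
    -- spanning parts
    have hspanTY : ∀ v, CSFAux.DC D (T ∪ Y₁) v :=
      fun v => CSFAux.spanning_of_qq_eq_one hd₀D (ha2.trans hqTF') v
    have hspanXY : ∀ v, CSFAux.DC D (X ∪ Y₂) v :=
      fun v => CSFAux.spanning_of_qq_eq_one hd₀D (hb2.trans hqXF') v
    have hcsfTY : IsCSF D (T ∪ Y₁) := CSFAux.isCSF_parts hdiagTY hacTY hspanTY
    have hcsfXY : IsCSF D (X ∪ Y₂) := CSFAux.isCSF_parts hdiagXY hacXY hspanXY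
    -- weights
    have hXY2disj : Disjoint X Y₂ := by
      rw [Finset.disjoint_left]
      intro x hx1 hx2
      have : x ∈ F' ∩ X := Finset.mem_inter.mpr ⟨hY2 hx2, hx1⟩
      rw [hdisj] at this
      exact Finset.notMem_empty _ this
    have hY12disj : Disjoint Y₁ Y₂ := by
      rw [Finset.disjoint_left]
      intro x hx1 hx2
      have : x ∈ Y₁ ∩ Y₂ := Finset.mem_inter.mpr ⟨hx1, hx2⟩
      rw [hdisjY] at this
      exact Finset.notMem_empty _ this
    have hsum1 : ∑ e ∈ T ∪ Y₁, w e ≤ (∑ e ∈ T, w e) + ∑ e ∈ Y₁, w e := by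
      have hdisjTs : Disjoint T (Y₁ \ T) := Finset.disjoint_sdiff
      have hun : T ∪ (Y₁ \ T) = T ∪ Y₁ := Finset.union_sdiff_self_eq_union
      have h1 : ∑ e ∈ T ∪ Y₁, w e = (∑ e ∈ T, w e) + ∑ e ∈ Y₁ \ T, w e := by
        rw [← hun, Finset.sum_union hdisjTs]
      have h2 : ∑ e ∈ Y₁ \ T, w e ≤ ∑ e ∈ Y₁, w e :=
        Finset.sum_le_sum_of_subset_of_nonneg Finset.sdiff_subset (fun e _ _ => hw e)
      linarith
    have hmin : ∑ e ∈ F, w e ≤ ∑ e ∈ X ∪ Y₂, w e := hFmin _ hcsfXY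
    have hsplitXY : ∑ e ∈ X ∪ Y₂, w e = (∑ e ∈ X, w e) + ∑ e ∈ Y₂, w e :=
      Finset.sum_union hXY2disj
    have hsplitF : (∑ e ∈ T, w e) + ∑ e ∈ X, w e = ∑ e ∈ F, w e := by
      rw [hTdef]
      exact Finset.sum_sdiff hX
    have hTY2 : ∑ e ∈ T, w e ≤ ∑ e ∈ Y₂, w e := by linarith
    have hsumY : (∑ e ∈ Y₁, w e) + ∑ e ∈ Y₂, w e = ∑ e ∈ Y₁ ∪ Y₂, w e :=
      (Finset.sum_union hY12disj).symm
    have hsub : ∑ e ∈ Y₁ ∪ Y₂, w e ≤ ∑ e ∈ F', w e :=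
      Finset.sum_le_sum_of_subset_of_nonneg (Finset.union_subset hY1 hY2)
        (fun e _ _ => hw e)
    exact ⟨Y₁, hY1, hcsfTY, by linarith⟩
end

section
/- Weight-reduction rounding: let w : E → ℕ be integral edge weights on a finite edge set E, let ε > 0 and β = max{w(e) : e ∈ E}. Define w'(e) = ⌊w(e) · 2|E|/(εβ)⌋. Then (i) max{w'(e) : e ∈ E} ≤ 2|E|/ε, and (ii) for every α ≥ 1 and every multiset J ⊆ E containing each edge at most twice, if w'(J) ≤ α · min{w'(J*) : J* ∈ 𝒮} for a family 𝒮 of feasible solutions with J ∈ 𝒮, then w(J) ≤ α · min{w(J*) : J* ∈ 𝒮} + εβ. -/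
open scoped Classical

/-! Put `c = εβ / (2|E|)`. Then `w' = ⌊w / c⌋₊`, so `c·w' ≤ w ≤ c·w' + c` on `E`: rounding
loses less than `c` per element of a solution, and a solution has at most `2|E|` elements, so the
total loss is at most `c · 2|E| = εβ`. The comparison solution `K` only needs `c·w' ≤ w`, which
costs nothing. -/

theorem Multiset.card_le_mul_card_of_count_le {γ : Type*} [DecidableEq γ] {s : Multiset γ}
    {t : Finset γ} {k : ℕ} (hst : ∀ x ∈ s, x ∈ t) (hk : ∀ x, s.count x ≤ k) :
    s.card ≤ k * t.card := by
  have hle : s ≤ k • t.val := Multiset.le_iff_count.mpr fun x => by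
    by_cases hx : x ∈ s
    · simpa [Multiset.count_eq_one_of_mem t.nodup (hst x hx)] using hk x
    · simp [Multiset.count_eq_zero.mpr hx]
  simpa using Multiset.card_le_card hle

theorem Nat.cast_multiset_sum_map {γ R : Type*} [AddCommMonoidWithOne R] (f : γ → ℕ)
    (s : Multiset γ) : (((s.map f).sum : ℕ) : R) = (s.map fun x => (f x : R)).sum := by
  rw [Nat.cast_multiset_sum, Multiset.map_map]
  rfl

theorem floor_mul_div_le_div {x b n ε : ℝ} (hx : 0 ≤ x) (hxb : x ≤ b) (hn : 0 ≤ n)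
    (hε : 0 < ε) : (⌊x * n / (ε * b)⌋₊ : ℝ) ≤ n / ε := by
  have hb : 0 ≤ b := hx.trans hxb
  have hxb' : x / b ≤ 1 := div_le_one_of_le₀ hxb hb
  calc (⌊x * n / (ε * b)⌋₊ : ℝ) ≤ x * n / (ε * b) := Nat.floor_le (by positivity)
    _ = x / b * (n / ε) := by ring
    _ ≤ n / ε := mul_le_of_le_one_left (by positivity) hxb'

theorem floor_mul_div_bounds {x b n ε : ℝ} (hx : 0 ≤ x) (hxb : x ≤ b) (hn : 0 < n)
    (hε : 0 < ε) :
    ε * b / n * ⌊x * n / (ε * b)⌋₊ ≤ x ∧ x ≤ ε * b / n * ⌊x * n / (ε * b)⌋₊ + ε * b / n := by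
  rcases (hx.trans hxb).eq_or_lt with hb | hb
  · obtain rfl : x = 0 := le_antisymm (hb ▸ hxb) hx
    simp [← hb]
  set c := ε * b / n
  have hc : 0 < c := by positivity
  rw [← div_div_eq_mul_div]
  constructor
  · calc c * ⌊x / c⌋₊ ≤ c * (x / c) := by gcongr; exact Nat.floor_le (div_nonneg hx hc.le)
      _ = x := mul_div_cancel₀ x hc.ne'
  · calc x = c * (x / c) := (mul_div_cancel₀ x hc.ne').symm
      _ ≤ c * (⌊x / c⌋₊ + 1) := by gcongr; exact (Nat.lt_floor_add_one _).le
      _ = c * ⌊x / c⌋₊ + c := by ring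

theorem sum_map_le_of_scaled_bounds {γ : Type*} {w w' : γ → ℝ} {c a : ℝ} {J K : Multiset γ}
    (hc : 0 ≤ c) (ha : 0 ≤ a) (hK : ∀ e ∈ K, c * w' e ≤ w e)
    (hJ : ∀ e ∈ J, w e ≤ c * w' e + c) (hJK : (J.map w').sum ≤ a * (K.map w').sum) :
    (J.map w).sum ≤ a * (K.map w).sum + c * J.card := by
  have hJ' : (J.map w).sum ≤ c * (J.map w').sum + c * J.card := by
    calc (J.map w).sum ≤ (J.map fun e => c * w' e + c).sum := Multiset.sum_map_le_sum_map _ _ hJ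
      _ = c * (J.map w').sum + c * J.card := by
        simp [Multiset.sum_map_add, Multiset.sum_map_mul_left, mul_comm]
  have hK' : c * (K.map w').sum ≤ (K.map w).sum := by
    rw [← Multiset.sum_map_mul_left]
    exact Multiset.sum_map_le_sum_map _ _ hK
  nlinarith [mul_le_mul_of_nonneg_left hJK hc, mul_le_mul_of_nonneg_left hK' ha]

theorem stmt8 {γ : Type*} [DecidableEq γ] (E : Finset γ) (w : γ → ℕ) (ε : ℝ) (hε : 0 < ε)
    (β : ℕ) (hβ : β = E.sup w)
    (w' : γ → ℕ) (hw' : ∀ e, w' e = ⌊(w e : ℝ) * (2 * E.card) / (ε * β)⌋₊)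
    (S : Set (Multiset γ))
    (hS : ∀ J ∈ S, (∀ x ∈ J, x ∈ E) ∧ ∀ x, Multiset.count x J ≤ 2)
    (a : ℝ) (ha : 1 ≤ a)
    (J : Multiset γ) (hJ : J ∈ S)
    (hmin : ∀ K ∈ S, ((J.map w').sum : ℝ) ≤ a * ((K.map w').sum : ℕ)) :
    (∀ e ∈ E, (w' e : ℝ) ≤ 2 * E.card / ε) ∧
    ∀ K ∈ S, ((J.map w).sum : ℝ) ≤ a * ((K.map w).sum : ℕ) + ε * β := by
  have hwβ : ∀ e ∈ E, (w e : ℝ) ≤ β := fun e he => by exact_mod_cast hβ ▸ Finset.le_sup he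
  refine ⟨fun e he => hw' e ▸
    floor_mul_div_le_div (Nat.cast_nonneg _) (hwβ e he) (by positivity) hε, fun K hK => ?_⟩
  set c : ℝ := ε * β / (2 * E.card)
  have hbounds : ∀ e ∈ E, c * w' e ≤ w e ∧ (w e : ℝ) ≤ c * w' e + c := fun e he => by
    have hE : (0 : ℝ) < E.card := by exact_mod_cast Finset.card_pos.mpr ⟨e, he⟩
    rw [hw' e]
    exact floor_mul_div_bounds (Nat.cast_nonneg _) (hwβ e he) (by positivity) hε
  obtain ⟨hJE, hJ2⟩ := hS J hJ
  have hJcard : J.card ≤ 2 * E.card := Multiset.card_le_mul_card_of_count_le hJE hJ2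
  have hloss : c * J.card ≤ ε * β := by
    rcases Nat.eq_zero_or_pos E.card with hE | hE
    · rw [show J.card = 0 by omega, Nat.cast_zero, mul_zero]
      positivity
    · calc c * J.card ≤ c * (2 * E.card) := by gcongr; exact_mod_cast hJcard
        _ = ε * β := div_mul_cancel₀ _ (by positivity)
  have hscaled := sum_map_le_of_scaled_bounds (w := fun e => (w e : ℝ)) (w' := fun e => (w' e : ℝ))
    (by positivity) (zero_le_one.trans ha) (fun e he => (hbounds e ((hS K hK).1 e he)).1)
    (fun e he => (hbounds e (hJE e he)).2)
    (by simpa only [Nat.cast_multiset_sum_map] using hmin K hK)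
  rw [Nat.cast_multiset_sum_map, Nat.cast_multiset_sum_map]
  linarith
end
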